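/- Let q₀ ≥ ⋯ ≥ q_{n−1} be reals and m ≥ 1 with n ≥ 2m+1. Define the m-trimmed mean of a multiset of N ≥ 2m+1 reals as the average of the N−2m values remaining after removing the m largest and m smallest. Among all ways to append m real values to q₀,…,q_{n−1}, the m-trimmed mean of the resulting n+m values is at most (1/(n−m))·Σ_{h=0}^{n−m−1} q_h, with equality when all m appended values exceed q₀. -/

import Mathlib

open Finset

/-- Median of a multiset of reals: average of the two middle order statistics
(equal to the middle one for odd cardinality). -/
noncomputable def med (s : Multiset ℝ) : ℝ :=
  ((s.sort (· ≤ ·)).getD ((Multiset.card s - 1) / 2) 0 +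
    (s.sort (· ≤ ·)).getD (Multiset.card s / 2) 0) / 2

/-- `m`-trimmed mean: remove the `m` largest and `m` smallest values and average the rest. -/
noncomputable def trimmedMean (m : ℕ) (s : Multiset ℝ) : ℝ :=
  ((((s.sort (· ≤ ·)).drop m).take (Multiset.card s - 2 * m)).sum) /
    ((Multiset.card s : ℝ) - 2 * m)

/-- The multiset of the first `n` values of `q`. -/
noncomputable def qMs (n : ℕ) (q : ℕ → ℝ) : Multiset ℝ :=
  (Finset.range n).val.map q

lemma sum_take_eq (l : List ℝ) (k : ℕ) (hk : k ≤ l.length) :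
    (l.take k).sum = ∑ i ∈ Finset.range k, l.getD i 0 := by
  induction k with
  | zero => simp
  | succ k ih =>
    rw [List.take_succ, List.sum_append, ih (by omega), Finset.sum_range_succ]
    have hk' : k < l.length := by omega
    simp [List.getElem?_eq_getElem hk', List.getD_eq_getElem _ _ hk']

lemma sorted_sublist_getD : ∀ {l₁ l₂ : List ℝ}, List.Sublist l₁ l₂ → l₂.Pairwise (· ≤ ·) →
    ∀ i, i < l₁.length → l₂.getD i 0 ≤ l₁.getD i 0 := by
  intro l₁ l₂ h
  induction h with
  | slnil => simp
  | @cons l₁ l₂ a h ih =>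
    intro hs i hi
    have h1 : l₂.getD i 0 ≤ l₁.getD i 0 := ih hs.of_cons i hi
    have hi2 : i < l₂.length := lt_of_lt_of_le hi h.length_le
    refine le_trans ?_ h1
    rw [List.getD_eq_getElem _ _ (show i < (a::l₂).length by simp; omega),
        List.getD_eq_getElem _ _ hi2]
    have := hs.rel_get_of_le (a := ⟨i, by simp; omega⟩) (b := ⟨i+1, by simp; omega⟩)
      (by simp [Fin.le_def])
    simpa using this
  | @cons_cons l₁ l₂ a h ih =>
    intro hs i hi
    match i with
    | 0 => simp
    | (j+1) =>
      simp only [List.getD_cons_succ]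
      exact ih hs.of_cons j (by simpa using hi)

lemma qMs_coe (n : ℕ) (q : ℕ → ℝ) :
    qMs n q = (((List.range n).map q : List ℝ) : Multiset ℝ) := rfl

lemma sortedR (n : ℕ) (q : ℕ → ℝ) (hq : ∀ i j, i ≤ j → j < n → q j ≤ q i) :
    List.Pairwise (· ≤ ·) ((List.range n).reverse.map q) := by
  rw [List.pairwise_map, List.pairwise_reverse, List.pairwise_iff_get]
  intro i j hij
  simp only [List.get_eq_getElem, List.getElem_range]
  have hj : (j : ℕ) < n := by have := j.isLt; simpa using this
  exact hq i j (le_of_lt hij) hj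

lemma coeR (n : ℕ) (q : ℕ → ℝ) :
    (((List.range n).reverse.map q : List ℝ) : Multiset ℝ) = qMs n q := by
  rw [qMs_coe]
  exact Multiset.coe_eq_coe.2 ((List.reverse_perm _).map q)

lemma sort_qMs (n : ℕ) (q : ℕ → ℝ) (hq : ∀ i j, i ≤ j → j < n → q j ≤ q i) :
    Multiset.sort (qMs n q) (· ≤ ·) = (List.range n).reverse.map q := by
  apply List.Perm.eq_of_pairwise' (Multiset.pairwise_sort _ _) (sortedR n q hq) ?_
  apply Multiset.coe_eq_coe.1
  rw [Multiset.sort_eq, coeR]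

lemma getD_R (n : ℕ) (q : ℕ → ℝ) (i : ℕ) (hi : i < n) :
    ((List.range n).reverse.map q).getD i 0 = q (n - 1 - i) := by
  rw [List.getD_eq_getElem _ _ (by simpa using hi)]
  simp [List.getElem_reverse]

theorem stmt7 (n m : ℕ) (hm : 1 ≤ m) (hn : 2 * m + 1 ≤ n) (q : ℕ → ℝ)
    (hq : ∀ i j, i ≤ j → j < n → q j ≤ q i) :
    (∀ t : Multiset ℝ, Multiset.card t = m →
      trimmedMean m (qMs n q + t) ≤ (∑ h ∈ Finset.range (n - m), q h) / ((n : ℝ) - m)) ∧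
    (∀ t : Multiset ℝ, Multiset.card t = m → (∀ x ∈ t, q 0 < x) →
      trimmedMean m (qMs n q + t) = (∑ h ∈ Finset.range (n - m), q h) / ((n : ℝ) - m)) := by
  set R : List ℝ := (List.range n).reverse.map q with hRdef
  have hlenR : R.length = n := by simp [hRdef]
  have hcardq : Multiset.card (qMs n q) = n := by simp [qMs]
  have hpos : (0 : ℝ) < (n : ℝ) - m := by
    have : m < n := by omega
    have := (Nat.cast_lt (α := ℝ)).2 this
    linarith
  have hsum_reflect : ∑ i ∈ Finset.range (n - m), q (n - 1 - (m + i)) =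
      ∑ h ∈ Finset.range (n - m), q h := by
    have := Finset.sum_range_reflect (fun h => q h) (n - m)
    calc ∑ i ∈ Finset.range (n - m), q (n - 1 - (m + i))
        = ∑ i ∈ Finset.range (n - m), q (n - m - 1 - i) := by
          apply Finset.sum_congr rfl
          intro i hi
          congr 1
          have := Finset.mem_range.1 hi
          omega
      _ = ∑ h ∈ Finset.range (n - m), q h := this
  constructor
  · intro t ht
    set L : List ℝ := Multiset.sort (qMs n q + t) (· ≤ ·) with hLdef
    have hcard : Multiset.card (qMs n q + t) = n + m := by
      rw [Multiset.card_add, hcardq, ht]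
    have hlenL : L.length = n + m := by
      rw [hLdef, Multiset.length_sort, hcard]
    have hsub : List.Sublist R L := by
      apply List.sublist_of_subperm_of_pairwise _ (sortedR n q hq) (Multiset.pairwise_sort _ _)
      apply Multiset.coe_le.1
      rw [Multiset.sort_eq, coeR]
      exact le_add_right (le_refl _) -- qMs n q ≤ qMs n q + t
    have hctn : Multiset.card (qMs n q + t) - 2 * m = n - m := by omega
    have hctr : (Multiset.card (qMs n q + t) : ℝ) - 2 * m = (n : ℝ) - m := by
      rw [hcard]; push_cast; ring
    rw [trimmedMean, hctn, hctr, ← hLdef]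
    refine div_le_div_of_nonneg_right ?_ hpos.le
    have hlen2 : (L.drop m).length = n := by rw [List.length_drop, hlenL]; omega
    rw [sum_take_eq _ _ (by omega)]
    rw [← hsum_reflect]
    apply Finset.sum_le_sum
    intro i hi
    have hi' : i < n - m := Finset.mem_range.1 hi
    have h1 : (L.drop m).getD i 0 = L.getD (m + i) 0 := by
      rw [List.getD_eq_getElem _ _ (by omega),
        List.getD_eq_getElem _ _ (show m + i < L.length by omega)]
      simp [List.getElem_drop]
    have h2 : L.getD (m + i) 0 ≤ R.getD (m + i) 0 :=
      sorted_sublist_getD hsub (Multiset.pairwise_sort _ _) (m + i) (by omega)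
    rw [h1]
    refine h2.trans_eq ?_
    rw [getD_R n q (m + i) (by omega)]
  · intro t ht htq
    set T : List ℝ := Multiset.sort t (· ≤ ·) with hTdef
    have hlenT : T.length = m := by rw [hTdef, Multiset.length_sort, ht]
    have hcross : ∀ x ∈ R, ∀ y ∈ T, x ≤ y := by
      intro x hx y hy
      obtain ⟨i, hi, rfl⟩ := List.mem_map.1 hx
      have hi' : i < n := by simpa using List.mem_reverse.1 hi
      have hyt : y ∈ t := (Multiset.mem_sort _).1 hy
      have h1 := htq y hyt
      have h0 : q i ≤ q 0 := hq 0 i (Nat.zero_le _) hi'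
      linarith
    have hsorted : List.Pairwise (· ≤ ·) (R ++ T) := by
      rw [List.pairwise_append]
      exact ⟨sortedR n q hq, Multiset.pairwise_sort _ _, hcross⟩
    have hLeq : Multiset.sort (qMs n q + t) (· ≤ ·) = R ++ T := by
      apply List.Perm.eq_of_pairwise' (Multiset.pairwise_sort _ _) hsorted ?_
      apply Multiset.coe_eq_coe.1
      rw [Multiset.sort_eq, ← Multiset.coe_add, coeR, hTdef, Multiset.sort_eq]
    have hcard : Multiset.card (qMs n q + t) = n + m := by
      rw [Multiset.card_add, hcardq, ht]
    have hctn : Multiset.card (qMs n q + t) - 2 * m = n - m := by omega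
    have hctr : (Multiset.card (qMs n q + t) : ℝ) - 2 * m = (n : ℝ) - m := by
      rw [hcard]; push_cast; ring
    rw [trimmedMean, hctn, hctr, hLeq]
    have hdrop : (R ++ T).drop m = R.drop m ++ T := by
      rw [List.drop_append]
      have h0 : m - R.length = 0 := by omega
      rw [h0, List.drop_zero]
    have hlen3 : (R.drop m).length = n - m := by rw [List.length_drop, hlenR]
    have htake : (R.drop m ++ T).take (n - m) = R.drop m := by
      rw [← hlen3]
      exact List.take_left
    rw [hdrop, htake]
    have hs1 : (R.drop m).sum = ∑ h ∈ Finset.range (n - m), q h := by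
      have h := sum_take_eq (R.drop m) (n - m) (by rw [hlen3])
      rw [List.take_of_length_le (by rw [hlen3])] at h
      rw [h, ← hsum_reflect]
      apply Finset.sum_congr rfl
      intro i hi
      have hi' : i < n - m := Finset.mem_range.1 hi
      have h1 : (R.drop m).getD i 0 = R.getD (m + i) 0 := by
        rw [List.getD_eq_getElem _ _ (by omega),
          List.getD_eq_getElem _ _ (show m + i < R.length by omega)]
        simp [List.getElem_drop]
      rw [h1, getD_R n q (m + i) (by omega)]
    rw [hs1]
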